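/- (Diagonal of Ψ_p equals one, used in Propositions 2 and 3.) For every p ∈ {0,…,N−1} and every ℓ₀ ∈ {−(L−1),…,L−1}, letting δ_{ℓ₀} : ℤ → ℂ be the function equal to 1 at ℓ₀ and 0 elsewhere: Σ_{q=0}^{N−1} ( |A_{pq}(δ_{ℓ₀})|² + |B_{pq}(δ_{ℓ₀})|² + |C_{pq}(δ_{ℓ₀})|² ) = 1. -/

import Mathlib

open Finset Matrix

/-- Normalized `N`-point DFT matrix: `[F]_{pn} = (1/√N)·e^{-2πipn/N}`. -/
noncomputable def Fdft (N : ℕ) : Matrix (Fin N) (Fin N) ℂ :=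
  Matrix.of fun p n : Fin N => (1 / ((Real.sqrt N : ℝ) : ℂ)) *
    Complex.exp (-(2 * (Real.pi : ℂ) * Complex.I * ((p : ℕ) : ℂ) * ((n : ℕ) : ℂ)) / (N : ℂ))

/-- Banded Toeplitz matrix with entries `g(m-n)`. -/
def Tzero (N : ℕ) (g : ℤ → ℂ) : Matrix (Fin N) (Fin N) ℂ :=
  Matrix.of fun m n : Fin N => g (((m : ℕ) : ℤ) - ((n : ℕ) : ℤ))

/-- Toeplitz matrix with entries `g(m-n+N)`. -/
def Tminus (N : ℕ) (g : ℤ → ℂ) : Matrix (Fin N) (Fin N) ℂ :=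
  Matrix.of fun m n : Fin N => g (((m : ℕ) : ℤ) - ((n : ℕ) : ℤ) + (N : ℤ))

/-- Toeplitz matrix with entries `g(m-n-N)`. -/
def Tplus (N : ℕ) (g : ℤ → ℂ) : Matrix (Fin N) (Fin N) ℂ :=
  Matrix.of fun m n : Fin N => g (((m : ℕ) : ℤ) - ((n : ℕ) : ℤ) - (N : ℤ))

/-- `A(g) = F·T⁻(g)·Fᴴ`. -/
noncomputable def Amat (N : ℕ) (g : ℤ → ℂ) : Matrix (Fin N) (Fin N) ℂ :=
  Fdft N * Tminus N g * (Fdft N)ᴴ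

/-- `B(g) = F·T⁰(g)·Fᴴ`. -/
noncomputable def Bmat (N : ℕ) (g : ℤ → ℂ) : Matrix (Fin N) (Fin N) ℂ :=
  Fdft N * Tzero N g * (Fdft N)ᴴ

/-- `C(g) = F·T⁺(g)·Fᴴ`. -/
noncomputable def Cmat (N : ℕ) (g : ℤ → ℂ) : Matrix (Fin N) (Fin N) ℂ :=
  Fdft N * Tplus N g * (Fdft N)ᴴ


lemma Fdft_unitary (N : ℕ) (hN : 0 < N) : Fdft N * (Fdft N)ᴴ = 1 := by
  ext p q
  have hNC : ((N:ℂ)) ≠ 0 := by exact_mod_cast hN.ne'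
  have hterm : ∀ n : Fin N,
      (Fdft N) p n * star ((Fdft N) q n)
      = (1 / (N:ℂ)) * Complex.exp (2 * Real.pi * Complex.I * (((q:ℕ):ℂ) - ((p:ℕ):ℂ)) / N) ^ (n:ℕ) := by
    intro n
    simp only [Fdft, Matrix.of_apply]
    rw [← Complex.exp_nat_mul]
    rw [star_mul']
    simp only [Complex.star_def]
    rw [← Complex.exp_conj]
    have h1 : (starRingEnd ℂ) (1 / ((Real.sqrt N : ℝ) : ℂ)) = 1 / ((Real.sqrt N : ℝ) : ℂ) := by
      simp
    rw [h1]
    have hsq : (1 / ((Real.sqrt N : ℝ) : ℂ)) * (1 / ((Real.sqrt N : ℝ) : ℂ)) = 1 / (N:ℂ) := by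
      rw [div_mul_div_comm, one_mul, ← Complex.ofReal_mul,
        Real.mul_self_sqrt (Nat.cast_nonneg N), Complex.ofReal_natCast]
    have hconj : (starRingEnd ℂ) ((-(2 * (Real.pi : ℂ) * Complex.I * ((q:ℕ):ℂ) * ((n:ℕ):ℂ))) / (N : ℂ))
        = (2 * (Real.pi : ℂ) * Complex.I * ((q:ℕ):ℂ) * ((n:ℕ):ℂ)) / (N : ℂ) := by
      simp only [map_div₀, map_neg, _root_.map_mul, Complex.conj_I, Complex.conj_natCast,
        Complex.conj_ofReal, map_ofNat]
      ring
    rw [hconj, mul_mul_mul_comm, hsq, ← Complex.exp_add]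
    congr 1
    rw [← mul_div_assoc, ← add_div]
    congr 1
    ring
  rw [Matrix.mul_apply]
  simp only [Matrix.conjTranspose_apply]
  rw [Finset.sum_congr rfl (fun n _ => hterm n)]
  rw [← Finset.mul_sum]
  set ζ : ℂ := Complex.exp (2 * Real.pi * Complex.I * (((q:ℕ):ℂ) - ((p:ℕ):ℂ)) / N) with hζ
  rw [Fin.sum_univ_eq_sum_range (fun n => ζ ^ n) N]
  by_cases hpq : p = q
  · subst hpq
    simp only [sub_self, mul_zero, zero_div, Complex.exp_zero, hζ] at *
    simp [Matrix.one_apply, hNC]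
  · have hd : ((q:ℕ):ℤ) - ((p:ℕ):ℤ) ≠ 0 := by
      intro h; apply hpq; apply Fin.ext; omega
    have hζN : ζ ^ N = 1 := by
      rw [← Complex.exp_nat_mul]
      have : (N:ℂ) * (2 * Real.pi * Complex.I * (((q:ℕ):ℂ) - ((p:ℕ):ℂ)) / N)
          = (((q:ℕ):ℤ) - ((p:ℕ):ℤ) : ℤ) * (2 * Real.pi * Complex.I) := by
        push_cast; field_simp
      rw [this, Complex.exp_int_mul_two_pi_mul_I]
    have hζ1 : ζ ≠ 1 := by
      intro h
      rw [hζ, Complex.exp_eq_one_iff] at h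
      obtain ⟨k, hk⟩ := h
      have h2 : (2 * (Real.pi:ℂ) * Complex.I) ≠ 0 := by
        simp [Real.pi_ne_zero, Complex.I_ne_zero]
      have hk' : 2 * (Real.pi:ℂ) * Complex.I * (((q:ℕ):ℂ) - ((p:ℕ):ℂ))
          = 2 * (Real.pi:ℂ) * Complex.I * (((k * N : ℤ):ℤ):ℂ) := by
        push_cast
        field_simp at hk
        linear_combination (2 * (Real.pi:ℂ) * Complex.I) * hk
      have h3 : (((q:ℕ):ℂ) - ((p:ℕ):ℂ)) = (((k * N : ℤ):ℤ):ℂ) := mul_left_cancel₀ h2 hk'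
      have h4 : ((q:ℕ):ℤ) - ((p:ℕ):ℤ) = k * N := by exact_mod_cast h3
      have h5 : (N:ℤ) ∣ (((q:ℕ):ℤ) - ((p:ℕ):ℤ)) := ⟨k, by rw [h4]; ring⟩
      have h6 := Int.eq_zero_of_dvd_of_natAbs_lt_natAbs h5
        (by have hq := q.isLt; have hp := p.isLt; omega)
      exact hd h6
    rw [geom_sum_eq hζ1, hζN, sub_self, zero_div, mul_zero]
    simp [Matrix.one_apply, hpq]

lemma Fdft_unitary' (N : ℕ) (hN : 0 < N) : (Fdft N)ᴴ * Fdft N = 1 :=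
  mul_eq_one_comm.mp (Fdft_unitary N hN)

lemma toeplitz_sum (N : ℕ) (hN : 0 < N) (ℓ₀ : ℤ) (hb : ℓ₀.natAbs < N) :
    Tminus N (fun ℓ => if ℓ = ℓ₀ then (1:ℂ) else 0) * (Tminus N (fun ℓ => if ℓ = ℓ₀ then (1:ℂ) else 0))ᴴ
    + Tzero N (fun ℓ => if ℓ = ℓ₀ then (1:ℂ) else 0) * (Tzero N (fun ℓ => if ℓ = ℓ₀ then (1:ℂ) else 0))ᴴ
    + Tplus N (fun ℓ => if ℓ = ℓ₀ then (1:ℂ) else 0) * (Tplus N (fun ℓ => if ℓ = ℓ₀ then (1:ℂ) else 0))ᴴ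
    = 1 := by
  ext m m'
  simp only [Matrix.add_apply, Matrix.mul_apply, Matrix.conjTranspose_apply, Tminus, Tzero,
    Tplus, Matrix.of_apply, apply_ite (star : ℂ → ℂ), star_one, star_zero,
    ite_mul, mul_ite, mul_one, mul_zero]
  rw [← Finset.sum_add_distrib, ← Finset.sum_add_distrib]
  by_cases hmm : m = m'
  · subst hmm
    have hm := m.isLt
    have hd1 : -(N:ℤ) < ((m:ℕ):ℤ) - ℓ₀ := by omega
    have hd2 : ((m:ℕ):ℤ) - ℓ₀ < 2*N := by omega
    set d : ℤ := ((m:ℕ):ℤ) - ℓ₀ with hd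
    have hex : ∃ k : ℕ, k < N ∧ ((k:ℤ) = d ∨ (k:ℤ) = d + N ∨ (k:ℤ) = d - N) := by
      by_cases h : d < 0
      · exact ⟨(d+N).toNat, by omega, by omega⟩
      · by_cases h2 : d < N
        · exact ⟨d.toNat, by omega, by omega⟩
        · exact ⟨(d-N).toNat, by omega, by omega⟩
    obtain ⟨k, hk, hn0⟩ := hex
    set n₀ : Fin N := ⟨k, hk⟩ with hn₀
    have hn0v : (n₀:ℕ) = k := rfl
    have hkey : ∀ n : Fin N,
        ((if ((m:ℕ):ℤ) - ((n:ℕ):ℤ) + (N:ℤ) = ℓ₀ then (if ((m:ℕ):ℤ) - ((n:ℕ):ℤ) + (N:ℤ) = ℓ₀ then (1:ℂ) else 0) else 0)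
        + (if ((m:ℕ):ℤ) - ((n:ℕ):ℤ) = ℓ₀ then (if ((m:ℕ):ℤ) - ((n:ℕ):ℤ) = ℓ₀ then (1:ℂ) else 0) else 0)
        + (if ((m:ℕ):ℤ) - ((n:ℕ):ℤ) - (N:ℤ) = ℓ₀ then (if ((m:ℕ):ℤ) - ((n:ℕ):ℤ) - (N:ℤ) = ℓ₀ then (1:ℂ) else 0) else 0))
        = if n = n₀ then 1 else 0 := by
      intro n
      have hn := n.isLt
      have hn0' := n₀.isLt
      have hn0v' := hn0v
      simp only [Fin.ext_iff]
      split_ifs <;> (try norm_num) <;> omega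
    rw [Finset.sum_congr rfl fun n _ => hkey n,
      Finset.sum_ite_eq' Finset.univ n₀ (fun _ => (1:ℂ))]
    simp [Matrix.one_apply]
  · have hne : (m:ℕ) ≠ (m':ℕ) := fun h => hmm (Fin.ext h)
    rw [Finset.sum_eq_zero (fun n _ => by
      have hn := n.isLt
      split_ifs <;> (try norm_num) <;> omega)]
    simp [Matrix.one_apply, hmm]

lemma sandwich (N : ℕ) (hN : 0 < N) (T : Matrix (Fin N) (Fin N) ℂ) :
    (Fdft N * T * (Fdft N)ᴴ) * (Fdft N * T * (Fdft N)ᴴ)ᴴ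
    = Fdft N * (T * Tᴴ) * (Fdft N)ᴴ := by
  simp only [Matrix.conjTranspose_mul, Matrix.conjTranspose_conjTranspose, Matrix.mul_assoc]
  rw [← Matrix.mul_assoc (Fdft N)ᴴ (Fdft N) (Tᴴ * (Fdft N)ᴴ), Fdft_unitary' N hN,
    Matrix.one_mul]

/-- Diagonal of `Ψ_p` equals one, used in Propositions 2 and 3: for the delta
function `δ_{ℓ₀}` at any lag `ℓ₀ ∈ {-(L-1),…,L-1}`,
`∑_{q=0}^{N-1} (|A_{pq}(δ_{ℓ₀})|² + |B_{pq}(δ_{ℓ₀})|² + |C_{pq}(δ_{ℓ₀})|²) = 1`. -/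
theorem stmt12 (N L : ℕ) (hL1 : 1 ≤ L) (hLN : L ≤ N) (p : Fin N)
    (ℓ₀ : ℤ) (hℓ₀ : ℓ₀ ∈ Finset.Icc (-(L : ℤ) + 1) ((L : ℤ) - 1)) :
    ∑ q : Fin N,
      (‖Amat N (fun ℓ => if ℓ = ℓ₀ then 1 else 0) p q‖ ^ 2
      + ‖Bmat N (fun ℓ => if ℓ = ℓ₀ then 1 else 0) p q‖ ^ 2
      + ‖Cmat N (fun ℓ => if ℓ = ℓ₀ then 1 else 0) p q‖ ^ 2) = 1 := by
  have hN : 0 < N := lt_of_lt_of_le hL1 hLN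
  set g : ℤ → ℂ := fun ℓ => if ℓ = ℓ₀ then 1 else 0 with hg
  simp only [Finset.mem_Icc] at hℓ₀
  have hb : ℓ₀.natAbs < N := by omega
  have key : Amat N g * (Amat N g)ᴴ + Bmat N g * (Bmat N g)ᴴ + Cmat N g * (Cmat N g)ᴴ = 1 := by
    have hdist : ∀ M1 M2 : Matrix (Fin N) (Fin N) ℂ,
        Fdft N * M1 * (Fdft N)ᴴ + Fdft N * M2 * (Fdft N)ᴴ = Fdft N * (M1 + M2) * (Fdft N)ᴴ := by
      intro M1 M2
      rw [Matrix.mul_add, Matrix.add_mul]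
    rw [Amat, Bmat, Cmat, sandwich N hN, sandwich N hN, sandwich N hN, hdist, hdist,
      toeplitz_sum N hN ℓ₀ hb, Matrix.mul_one, Fdft_unitary N hN]
  have h2 : (Amat N g * (Amat N g)ᴴ + Bmat N g * (Bmat N g)ᴴ + Cmat N g * (Cmat N g)ᴴ) p p
      = 1 := by rw [key]; simp [Matrix.one_apply]
  simp only [Matrix.add_apply, Matrix.mul_apply, Matrix.conjTranspose_apply] at h2
  rw [← Finset.sum_add_distrib, ← Finset.sum_add_distrib] at h2
  have habs : ∀ z : ℂ, ((‖z‖ : ℝ) : ℂ) ^ 2 = z * star z := by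
    intro z
    rw [← Complex.ofReal_pow, Complex.sq_norm]
    exact (Complex.mul_conj z).symm
  have h3 : ((∑ q : Fin N,
      (‖Amat N g p q‖ ^ 2 + ‖Bmat N g p q‖ ^ 2
        + ‖Cmat N g p q‖ ^ 2) : ℝ) : ℂ) = 1 := by
    push_cast
    rw [← h2]
    refine Finset.sum_congr rfl fun q _ => ?_
    rw [habs, habs, habs]
  exact_mod_cast h3
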